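/- (Oblique Subspace Pursuit, Step 1.) Let Ψ, Ψ̃ ∈ K^{m×n}, let x* ∈ K^n be s-sparse with support J*, let z ∈ K^m and y = Ψx* + z. Let J ⊆ {1,…,n} with 1 ≤ |J| ≤ 2s, assume θ := θ_{3s}(Ψ̃*Ψ) < 1, and set δ̃ := δ_{2s}(Ψ̃). Let x₁ be the (unique) vector supported on J with Ψ̃_J*(y − Ψx₁) = 0 (well defined since Ψ̃_J*Ψ_J is invertible). Then ‖x₁ − x*‖₂ ≤ (1/√(1−θ²))·‖Π_{J*\J}x*‖₂ + (√(1+δ̃)/(1−θ))·‖z‖₂. -/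

import Mathlib

open scoped BigOperators
open Matrix MeasureTheory

noncomputable section

namespace ObliquePursuit

variable {𝕜 : Type*} [RCLike 𝕜]

/-- The Euclidean (`ℓ²`) norm of a finitely indexed vector. -/
def l2 {ι : Type*} [Fintype ι] (x : ι → 𝕜) : ℝ :=
  Real.sqrt (∑ i, ‖x i‖ ^ 2)

/-- The spectral (`ℓ² → ℓ²` operator) norm of a matrix. -/
def specNorm {ι κ : Type*} [Fintype ι] [Fintype κ] [DecidableEq κ]
    (M : Matrix ι κ 𝕜) : ℝ :=
  ‖LinearMap.toContinuousLinearMap (Matrix.toEuclideanLin M)‖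

/-- `x` is `s`-sparse: it has at most `s` nonzero entries. -/
def Sparse {ι : Type*} (s : ℕ) (x : ι → 𝕜) : Prop :=
  ∃ J : Finset ι, J.card ≤ s ∧ ∀ i, x i ≠ 0 → i ∈ J

/-- The `s`-restricted biorthogonality constant `θ_s(M)`: the smallest `δ ≥ 0` such that
`|⟨y, Mx⟩ − ⟨y, x⟩| ≤ δ‖x‖₂‖y‖₂` for all `x, y` supported on a common index set of
cardinality at most `s`. -/
def theta {ι : Type*} [Fintype ι] (s : ℕ) (M : Matrix ι ι 𝕜) : ℝ :=
  sInf {δ : ℝ | 0 ≤ δ ∧ ∀ J : Finset ι, J.card ≤ s →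
    ∀ x y : ι → 𝕜, (∀ i, x i ≠ 0 → i ∈ J) → (∀ i, y i ≠ 0 → i ∈ J) →
      ‖star y ⬝ᵥ M.mulVec x - star y ⬝ᵥ x‖ ≤ δ * l2 x * l2 y}

/-- The `s`-restricted isometry constant `δ_s(Ψ)`. -/
def ric {ι κ : Type*} [Fintype ι] [Fintype κ] (s : ℕ) (Ψ : Matrix ι κ 𝕜) : ℝ :=
  sInf {δ : ℝ | 0 ≤ δ ∧ ∀ x : κ → 𝕜, Sparse s x →
    (1 - δ) * l2 x ^ 2 ≤ l2 (Ψ.mulVec x) ^ 2 ∧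
      l2 (Ψ.mulVec x) ^ 2 ≤ (1 + δ) * l2 x ^ 2}

/-- Coordinate projection `Π_J`: keep the entries indexed by `J`, zero out the others. -/
def proj {ι : Type*} [DecidableEq ι] (J : Finset ι) (x : ι → 𝕜) : ι → 𝕜 :=
  fun i => if i ∈ J then x i else 0

/-- The column submatrix `Ψ_J` of `Ψ` formed by the columns indexed by `J`. -/
def cols {ι κ : Type*} (Ψ : Matrix ι κ 𝕜) (J : Finset κ) :
    Matrix ι {j // j ∈ J} 𝕜 :=
  Ψ.submatrix id fun j => (j : κ)

/-- The `j`-th column of `Ψ`. -/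
def col {ι κ : Type*} (Ψ : Matrix ι κ 𝕜) (j : κ) : ι → 𝕜 :=
  fun i => Ψ i j

/-- The complementary oblique projector `E = I − Ψ_J (Ψ̃_J^* Ψ_J)⁻¹ Ψ̃_J^*`
(equal to `I` when `J = ∅`). -/
def obliqueE {ι κ : Type*} [Fintype ι] [DecidableEq ι] [DecidableEq κ]
    (Ψ Ψt : Matrix ι κ 𝕜) (J : Finset κ) : Matrix ι ι 𝕜 :=
  1 - cols Ψ J * ((cols Ψt J)ᴴ * cols Ψ J)⁻¹ * (cols Ψt J)ᴴ

/-- The smallest (real) eigenvalue of a matrix. -/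
def lamMin {ι : Type*} [Fintype ι] (G : Matrix ι ι 𝕜) : ℝ :=
  sInf {r : ℝ | ∃ v : ι → 𝕜, v ≠ 0 ∧ G.mulVec v = (r : 𝕜) • v}

/-- The `j`-th largest singular value (1-indexed) of a matrix, characterized via the
Eckart–Young–Mirsky theorem: `σ_j(A) = min { ‖A − B‖ : rank B < j }` where `‖·‖` is the
spectral norm. -/
def singVal {ι κ : Type*} [Fintype ι] [Fintype κ] [DecidableEq κ]
    (A : Matrix ι κ 𝕜) (j : ℕ) : ℝ :=
  sInf {r : ℝ | ∃ B : Matrix ι κ 𝕜, B.rank < j ∧ r = specNorm (A - B)}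

lemma l2_nonneg {ι : Type*} [Fintype ι] (x : ι → 𝕜) : 0 ≤ l2 x := Real.sqrt_nonneg _

lemma l2_sq {ι : Type*} [Fintype ι] (x : ι → 𝕜) : l2 x ^ 2 = ∑ i, ‖x i‖ ^ 2 :=
  Real.sq_sqrt (Finset.sum_nonneg fun _ _ => sq_nonneg _)

lemma l2_eq_zero {ι : Type*} [Fintype ι] {x : ι → 𝕜} (h : l2 x = 0) : x = 0 := by
  funext i
  have h2 : ∑ j, ‖x j‖ ^ 2 = 0 := by
    have := l2_sq x; rw [h] at this; simpa using this.symm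
  have := (Finset.sum_eq_zero_iff_of_nonneg (fun j _ => sq_nonneg ‖x j‖)).1 h2 i (by simp)
  simpa using pow_eq_zero_iff (n := 2) (by norm_num) |>.1 this

lemma l2_eq_norm {ι : Type*} [Fintype ι] (x : ι → 𝕜) :
    l2 x = ‖(WithLp.equiv 2 (ι → 𝕜)).symm x‖ := by
  rw [EuclideanSpace.norm_eq]; rfl

/-- Cauchy–Schwarz for the raw dot product. -/
lemma cs {ι : Type*} [Fintype ι] (x y : ι → 𝕜) :
    ‖star x ⬝ᵥ y‖ ≤ l2 x * l2 y := by
  rw [dotProduct_comm, ← EuclideanSpace.inner_toLp_toLp, l2_eq_norm, l2_eq_norm]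
  exact norm_inner_le_norm _ _

/-- Frobenius bound. -/
lemma mulVec_l2_le {ι κ : Type*} [Fintype ι] [Fintype κ] (M : Matrix ι κ 𝕜) (x : κ → 𝕜) :
    l2 (M.mulVec x) ≤ Real.sqrt (∑ i, ∑ j, ‖M i j‖ ^ 2) * l2 x := by
  have hsq : l2 (M.mulVec x) ^ 2 ≤ (∑ i, ∑ j, ‖M i j‖ ^ 2) * l2 x ^ 2 := by
    rw [l2_sq, Finset.sum_mul]
    refine Finset.sum_le_sum fun i _ => ?_
    have h1 : ‖M.mulVec x i‖ ≤ l2 (star (M i)) * l2 x := by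
      have := cs (star (M i)) x
      simpa [Matrix.mulVec, dotProduct] using this
    have h2 : l2 (star (M i)) ^ 2 = ∑ j, ‖M i j‖ ^ 2 := by
      rw [l2_sq]; simp [Pi.star_def]
    calc ‖M.mulVec x i‖ ^ 2 ≤ (l2 (star (M i)) * l2 x) ^ 2 := by
          have := norm_nonneg (M.mulVec x i)
          exact pow_le_pow_left₀ this h1 2
      _ = (∑ j, ‖M i j‖ ^ 2) * l2 x ^ 2 := by rw [mul_pow, h2]
  have h0 : 0 ≤ Real.sqrt (∑ i, ∑ j, ‖M i j‖ ^ 2) * l2 x :=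
    mul_nonneg (Real.sqrt_nonneg _) (l2_nonneg x)
  nlinarith [l2_nonneg (M.mulVec x), Real.sq_sqrt (show (0:ℝ) ≤ ∑ i, ∑ j, ‖M i j‖ ^ 2 from Finset.sum_nonneg fun _ _ => Finset.sum_nonneg fun _ _ => sq_nonneg _)]


lemma thetaSet_nonempty {ι : Type*} [Fintype ι] (s : ℕ) (M : Matrix ι ι 𝕜) :
    {δ : ℝ | 0 ≤ δ ∧ ∀ J : Finset ι, J.card ≤ s →
    ∀ x y : ι → 𝕜, (∀ i, x i ≠ 0 → i ∈ J) → (∀ i, y i ≠ 0 → i ∈ J) →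
      ‖star y ⬝ᵥ M.mulVec x - star y ⬝ᵥ x‖ ≤ δ * l2 x * l2 y}.Nonempty := by
  classical
  refine ⟨Real.sqrt (∑ i, ∑ j, ‖(M - 1) i j‖ ^ 2), Real.sqrt_nonneg _, ?_⟩
  intro J hJ x y hx hy
  have he : star y ⬝ᵥ M.mulVec x - star y ⬝ᵥ x = star y ⬝ᵥ (M - 1).mulVec x := by
    rw [Matrix.sub_mulVec, Matrix.one_mulVec, dotProduct_sub]
  rw [he]
  calc ‖star y ⬝ᵥ (M - 1).mulVec x‖ ≤ l2 y * l2 ((M - 1).mulVec x) := cs y _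
    _ ≤ l2 y * (Real.sqrt (∑ i, ∑ j, ‖(M - 1) i j‖ ^ 2) * l2 x) :=
        mul_le_mul_of_nonneg_left (mulVec_l2_le _ _) (l2_nonneg y)
    _ = Real.sqrt (∑ i, ∑ j, ‖(M - 1) i j‖ ^ 2) * l2 x * l2 y := by ring

lemma theta_nonneg {ι : Type*} [Fintype ι] (s : ℕ) (M : Matrix ι ι 𝕜) : 0 ≤ theta s M :=
  le_csInf (thetaSet_nonempty s M) fun _ h => h.1

lemma theta_spec {ι : Type*} [Fintype ι] {s : ℕ} (M : Matrix ι ι 𝕜)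
    (J : Finset ι) (hJ : J.card ≤ s) (x y : ι → 𝕜)
    (hx : ∀ i, x i ≠ 0 → i ∈ J) (hy : ∀ i, y i ≠ 0 → i ∈ J) :
    ‖star y ⬝ᵥ M.mulVec x - star y ⬝ᵥ x‖ ≤ theta s M * l2 x * l2 y := by
  set c := l2 x * l2 y with hc
  have hc0 : 0 ≤ c := mul_nonneg (l2_nonneg x) (l2_nonneg y)
  have key : ∀ δ ∈ {δ : ℝ | 0 ≤ δ ∧ ∀ J : Finset ι, J.card ≤ s →
      ∀ x y : ι → 𝕜, (∀ i, x i ≠ 0 → i ∈ J) → (∀ i, y i ≠ 0 → i ∈ J) →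
        ‖star y ⬝ᵥ M.mulVec x - star y ⬝ᵥ x‖ ≤ δ * l2 x * l2 y},
      ‖star y ⬝ᵥ M.mulVec x - star y ⬝ᵥ x‖ ≤ δ * c := by
    intro δ hδ
    have := hδ.2 J hJ x y hx hy
    linarith [this, (by ring : δ * l2 x * l2 y = δ * c)]
  rcases hc0.lt_or_eq with h0 | h0
  · have : ‖star y ⬝ᵥ M.mulVec x - star y ⬝ᵥ x‖ / c ≤ theta s M :=
      le_csInf (thetaSet_nonempty s M) fun δ hδ => (div_le_iff₀ h0).2 (key δ hδ)
    have := (div_le_iff₀ h0).1 this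
    calc ‖star y ⬝ᵥ M.mulVec x - star y ⬝ᵥ x‖ ≤ theta s M * c := this
      _ = theta s M * l2 x * l2 y := by rw [hc]; ring
  · obtain ⟨δ, hδ⟩ := thetaSet_nonempty s M
    have h1 := key δ hδ
    rw [← h0] at h1
    simp only [mul_zero] at h1
    have : theta s M * l2 x * l2 y = theta s M * c := by rw [hc]; ring
    rw [this, ← h0, mul_zero]
    exact h1

lemma ricSet_nonempty {ι κ : Type*} [Fintype ι] [Fintype κ] (s : ℕ) (Ψ : Matrix ι κ 𝕜) :
    {δ : ℝ | 0 ≤ δ ∧ ∀ x : κ → 𝕜, Sparse s x →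
      (1 - δ) * l2 x ^ 2 ≤ l2 (Ψ.mulVec x) ^ 2 ∧
        l2 (Ψ.mulVec x) ^ 2 ≤ (1 + δ) * l2 x ^ 2}.Nonempty := by
  classical
  set F := Real.sqrt (∑ i, ∑ j, ‖Ψ i j‖ ^ 2) with hF
  have hF0 : 0 ≤ F := Real.sqrt_nonneg _
  refine ⟨max 1 (F ^ 2), le_trans zero_le_one (le_max_left _ _), ?_⟩
  intro x _
  constructor
  · have h1 : (1 : ℝ) - max 1 (F ^ 2) ≤ 0 := by
      have := le_max_left 1 (F ^ 2); linarith
    have := sq_nonneg (l2 (Ψ.mulVec x))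
    nlinarith [sq_nonneg (l2 x)]
  · have h1 : l2 (Ψ.mulVec x) ≤ F * l2 x := mulVec_l2_le Ψ x
    have h2 : l2 (Ψ.mulVec x) ^ 2 ≤ (F * l2 x) ^ 2 :=
      pow_le_pow_left₀ (l2_nonneg _) h1 2
    have h3 : F ^ 2 ≤ 1 + max 1 (F ^ 2) := by
      have := le_max_right 1 (F ^ 2); linarith
    nlinarith [sq_nonneg (l2 x)]

lemma ric_nonneg {ι κ : Type*} [Fintype ι] [Fintype κ] (s : ℕ) (Ψ : Matrix ι κ 𝕜) :
    0 ≤ ric s Ψ :=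
  le_csInf (ricSet_nonempty s Ψ) fun _ h => h.1

lemma ric_upper {ι κ : Type*} [Fintype ι] [Fintype κ] {s : ℕ} (Ψ : Matrix ι κ 𝕜)
    {x : κ → 𝕜} (hx : Sparse s x) :
    l2 (Ψ.mulVec x) ^ 2 ≤ (1 + ric s Ψ) * l2 x ^ 2 := by
  set c := l2 x ^ 2 with hc
  have hc0 : 0 ≤ c := sq_nonneg _
  rcases hc0.lt_or_eq with h0 | h0
  · have key : (l2 (Ψ.mulVec x) ^ 2 - c) / c ≤ ric s Ψ := by
      refine le_csInf (ricSet_nonempty s Ψ) fun δ hδ => ?_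
      have := (hδ.2 x hx).2
      rw [div_le_iff₀ h0]
      rw [hc] at h0 ⊢
      nlinarith
    have := (div_le_iff₀ h0).1 key
    linarith
  · have hx0 : x = 0 := by
      apply l2_eq_zero
      have : l2 x ^ 2 = 0 := h0.symm
      nlinarith [l2_nonneg x]
    subst hx0
    rw [Matrix.mulVec_zero]
    have h5 : l2 (0 : ι → 𝕜) = 0 := by
      simp [l2]
    rw [h5, ← h0, mul_zero]
    norm_num

lemma ric_sqrt_bound {ι κ : Type*} [Fintype ι] [Fintype κ] {s : ℕ} (Ψ : Matrix ι κ 𝕜)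
    {x : κ → 𝕜} (hx : Sparse s x) :
    l2 (Ψ.mulVec x) ≤ Real.sqrt (1 + ric s Ψ) * l2 x := by
  have h1 := ric_upper Ψ hx
  have h2 : 0 ≤ 1 + ric s Ψ := by linarith [ric_nonneg s Ψ]
  have := Real.sqrt_le_sqrt h1
  rw [Real.sqrt_sq (l2_nonneg (Ψ.mulVec x))] at this
  calc l2 (Ψ.mulVec x) ≤ Real.sqrt ((1 + ric s Ψ) * l2 x ^ 2) := this
    _ = Real.sqrt (1 + ric s Ψ) * l2 x := by
        rw [Real.sqrt_mul h2, Real.sqrt_sq (l2_nonneg x)]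


set_option maxHeartbeats 2000000 in
/-- Oblique Subspace Pursuit, Step 1. -/
theorem statement10 (m n s : ℕ) (Ψ Ψt : Matrix (Fin m) (Fin n) 𝕜)
    (xstar : Fin n → 𝕜) (Jstar : Finset (Fin n))
    (hsupp : ∀ i, xstar i ≠ 0 ↔ i ∈ Jstar) (hcard : Jstar.card ≤ s)
    (z y : Fin m → 𝕜) (hy : y = Ψ.mulVec xstar + z)
    (J : Finset (Fin n)) (hJ1 : 1 ≤ J.card) (hJ2 : J.card ≤ 2 * s)
    (θ : ℝ) (hθdef : θ = theta (3 * s) (Ψtᴴ * Ψ)) (hθ : θ < 1)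
    (x₁ : Fin n → 𝕜) (hsupp1 : ∀ i, x₁ i ≠ 0 → i ∈ J)
    (horth : ∀ j ∈ J, star (col Ψt j) ⬝ᵥ (y - Ψ.mulVec x₁) = 0) :
    l2 (x₁ - xstar) ≤
      1 / Real.sqrt (1 - θ ^ 2) * l2 (proj (Jstar \ J) xstar) +
        Real.sqrt (1 + ric (2 * s) Ψt) / (1 - θ) * l2 z := by
  classical
  have hθ0 : 0 ≤ θ := hθdef ▸ theta_nonneg _ _
  set u : Fin n → 𝕜 := x₁ - xstar with hu
  set v : Fin n → 𝕜 := fun i => if i ∈ J then u i else 0 with hv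
  set w : Fin n → 𝕜 := fun i => if i ∈ J then 0 else u i with hw
  have hvsupp : ∀ i, v i ≠ 0 → i ∈ J := by
    intro i hi; by_contra h; simp [hv, h] at hi
  have husupp : ∀ i, u i ≠ 0 → i ∈ J ∪ Jstar := by
    intro i hi
    by_contra h
    simp only [Finset.mem_union, not_or] at h
    have h1 : x₁ i = 0 := by by_contra hx; exact h.1 (hsupp1 i hx)
    have h2 : xstar i = 0 := by by_contra hx; exact h.2 ((hsupp i).1 hx)
    exact hi (by simp [hu, Pi.sub_apply, h1, h2])
  -- Pythagoras
  have hpyth : l2 u ^ 2 = l2 v ^ 2 + l2 w ^ 2 := by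
    rw [l2_sq, l2_sq, l2_sq, ← Finset.sum_add_distrib]
    refine Finset.sum_congr rfl fun i _ => ?_
    by_cases h : i ∈ J <;> simp [hv, hw, h]
  -- w equals the projection (in norm)
  have hwproj : l2 w = l2 (proj (Jstar \ J) xstar) := by
    unfold l2
    congr 1
    refine Finset.sum_congr rfl fun i _ => ?_
    by_cases h : i ∈ J
    · simp [hw, proj, h]
    · have hx1 : x₁ i = 0 := by by_contra hx; exact h (hsupp1 i hx)
      have hwi : w i = -xstar i := by
        simp [hw, h, hu, Pi.sub_apply, hx1]
      by_cases h2 : xstar i = 0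
      · have h3 : i ∉ Jstar := fun hm => (hsupp i).2 hm h2
        have hpi : proj (Jstar \ J) xstar i = 0 := by
          simp [proj, Finset.mem_sdiff, h2]
        rw [hwi, hpi, h2]
        simp
      · have h3 : i ∈ Jstar := (hsupp i).1 h2
        have hpi : proj (Jstar \ J) xstar i = xstar i := by
          simp [proj, Finset.mem_sdiff, h3, h]
        rw [hwi, hpi, norm_neg]
  -- orthogonality
  have hyu : y - Ψ.mulVec x₁ = z - Ψ.mulVec u := by
    rw [hy, hu, Matrix.mulVec_sub]; abel
  have hDj : ∀ j ∈ J, (Ψtᴴ * Ψ).mulVec u j = Ψtᴴ.mulVec z j := by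
    intro j hj
    have h0 := horth j hj
    rw [hyu] at h0
    have hdot : ∀ wv : Fin m → 𝕜, Ψtᴴ.mulVec wv j = star (col Ψt j) ⬝ᵥ wv := by
      intro wv
      simp [Matrix.mulVec, dotProduct, Matrix.conjTranspose_apply, col, Pi.star_def]
    rw [dotProduct_sub] at h0
    have h1 : (Ψtᴴ * Ψ).mulVec u = Ψtᴴ.mulVec (Ψ.mulVec u) := (Matrix.mulVec_mulVec u Ψtᴴ Ψ).symm
    rw [h1, hdot, hdot]
    linear_combination -h0
  have hkey : star v ⬝ᵥ (Ψtᴴ * Ψ).mulVec u = star (Ψt.mulVec v) ⬝ᵥ z := by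
    have h1 : star v ⬝ᵥ (Ψtᴴ * Ψ).mulVec u = star v ⬝ᵥ Ψtᴴ.mulVec z := by
      simp only [dotProduct, Pi.star_apply]
      refine Finset.sum_congr rfl fun j _ => ?_
      by_cases hvj : v j = 0
      · simp [hvj]
      · rw [hDj j (hvsupp j hvj)]
    rw [h1, Matrix.dotProduct_mulVec, Matrix.star_mulVec]
  have hvu : star v ⬝ᵥ u = ((l2 v ^ 2 : ℝ) : 𝕜) := by
    rw [l2_sq]
    push_cast
    simp only [dotProduct, Pi.star_apply]
    refine Finset.sum_congr rfl fun i _ => ?_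
    by_cases h : i ∈ J
    · simp only [hv, if_pos h, RCLike.star_def]
      rw [RCLike.conj_mul]
    · simp [hv, h]
  -- theta bound
  have hcard3 : (J ∪ Jstar).card ≤ 3 * s :=
    le_trans (Finset.card_union_le _ _) (by omega)
  have hθapp : ‖star v ⬝ᵥ (Ψtᴴ * Ψ).mulVec u - star v ⬝ᵥ u‖ ≤ θ * l2 u * l2 v := by
    rw [hθdef]
    exact theta_spec _ (J ∪ Jstar) hcard3 u v husupp
      (fun i hi => Finset.mem_union_left _ (hvsupp i hi))
  set C : ℝ := Real.sqrt (1 + ric (2 * s) Ψt) with hC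
  have hC0 : 0 ≤ C := Real.sqrt_nonneg _
  have hzb : ‖star (Ψt.mulVec v) ⬝ᵥ z‖ ≤ C * l2 v * l2 z := by
    calc ‖star (Ψt.mulVec v) ⬝ᵥ z‖ ≤ l2 (Ψt.mulVec v) * l2 z := cs _ _
      _ ≤ (C * l2 v) * l2 z :=
        mul_le_mul_of_nonneg_right (ric_sqrt_bound Ψt ⟨J, hJ2, hvsupp⟩) (l2_nonneg z)
      _ = C * l2 v * l2 z := by ring
  have hnorm_vu : ‖star v ⬝ᵥ u‖ = l2 v ^ 2 := by
    rw [hvu]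
    rw [RCLike.norm_ofReal, abs_of_nonneg (sq_nonneg _)]
  have hmain : l2 v ^ 2 ≤ θ * l2 u * l2 v + C * l2 z * l2 v := by
    have htri := norm_sub_le (star v ⬝ᵥ (Ψtᴴ * Ψ).mulVec u)
      (star v ⬝ᵥ (Ψtᴴ * Ψ).mulVec u - star v ⬝ᵥ u)
    rw [sub_sub_cancel, hnorm_vu] at htri
    rw [← hkey] at hzb
    nlinarith [hθapp, hzb, htri]
  -- cancel l2 v
  have hvle : l2 v ≤ θ * l2 u + C * l2 z := by
    rcases (l2_nonneg v).lt_or_eq with hp | hp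
    · nlinarith
    · rw [← hp]
      have := mul_nonneg hθ0 (l2_nonneg u)
      have := mul_nonneg hC0 (l2_nonneg z)
      linarith
  -- final algebra
  set a := l2 u with ha
  set b := l2 (proj (Jstar \ J) xstar) with hb
  set c := C * l2 z with hcc
  have hb0 : 0 ≤ b := l2_nonneg _
  have ha0 : 0 ≤ a := l2_nonneg _
  have hc0 : 0 ≤ c := mul_nonneg hC0 (l2_nonneg z)
  have hquad : a ^ 2 ≤ (θ * a + c) ^ 2 + b ^ 2 := by
    have h1 : l2 v ^ 2 ≤ (θ * a + c) ^ 2 := by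
      have := pow_le_pow_left₀ (l2_nonneg v) hvle 2
      simpa [hcc] using this
    rw [← hwproj] at hb
    rw [hpyth, hb]
    linarith
  set t := Real.sqrt (1 - θ ^ 2) with htdef
  have ht2 : t ^ 2 = 1 - θ ^ 2 := Real.sq_sqrt (by nlinarith)
  have ht : 0 < t := Real.sqrt_pos.2 (by nlinarith)
  have h1θ : 0 < 1 - θ := by linarith
  have key2 : a * (t * (1 - θ)) ≤ b * (1 - θ) + c * t := by
    rcases le_or_gt ((1 - θ) * a - c) 0 with hcase | hcase
    · nlinarith [mul_nonpos_of_nonneg_of_nonpos ht.le hcase, mul_nonneg hb0 h1θ.le]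
    · have hq2 : (1 - θ ^ 2) * a ^ 2 - 2 * θ * a * c - c ^ 2 ≤ b ^ 2 := by nlinarith [hquad]
      have hsq : (t * ((1 - θ) * a - c)) ^ 2 ≤ ((1 - θ) * b) ^ 2 := by
        have hX : (t * ((1 - θ) * a - c)) ^ 2 = (1 - θ ^ 2) * ((1 - θ) * a - c) ^ 2 := by
          rw [mul_pow, ht2]
        rw [hX]
        nlinarith [mul_le_mul_of_nonneg_left hq2 (sq_nonneg (1 - θ)),
          mul_nonneg (mul_nonneg h1θ.le hc0) hcase.le]
      have hln : t * ((1 - θ) * a - c) ≤ (1 - θ) * b := by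
        have hl : 0 ≤ t * ((1 - θ) * a - c) := mul_nonneg ht.le hcase.le
        have hr : 0 ≤ (1 - θ) * b := mul_nonneg h1θ.le hb0
        nlinarith
      nlinarith
  have hrw : 1 / t * b + C / (1 - θ) * l2 z = (b * (1 - θ) + c * t) / (t * (1 - θ)) := by
    rw [hcc]
    field_simp
  rw [hrw]
  rw [le_div_iff₀ (by positivity)]
  exact key2

end ObliquePursuit
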